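/- (Lemma 6, reverse transformation, sample version.) Let φ be a posterior family, f a test quantity, and define g(θ,y) := −f(θ,y). Then for all y ∈ Y, θ̃ ∈ Θ, M ∈ ℕ and i ∈ {0,…,M−1}: R_{φ,g}(i|θ̃,y) = 1 − R_{φ,f}(M − i − 1 | θ̃, y). -/
import Mathlib


open MeasureTheory Filter Topology

noncomputable section

namespace SBC

variable {Θ Y : Type*} [MeasurableSpace Θ] [MeasurableSpace Y]

/-- Marginal density of the data: `π_marg(y) = ∫ obs(y|θ) prior(θ) dλΘ(θ)`. -/
def marg (lΘ : Measure Θ) (prior : Θ → ℝ) (obs : Y → Θ → ℝ) (y : Y) : ℝ :=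
  ∫ θ, obs y θ * prior θ ∂lΘ

/-- Posterior density: `π_post(θ|y) = obs(y|θ) prior(θ) / π_marg(y)`. -/
def post (lΘ : Measure Θ) (prior : Θ → ℝ) (obs : Y → Θ → ℝ) (θ : Θ) (y : Y) : ℝ :=
  obs y θ * prior θ / marg lΘ prior obs y

/-- CDF of the test quantity `f` under the density `φ(·|y)`:
`C_{φ,f}(s|y) = ∫ 1[f(θ,y) ≤ s] φ(θ|y) dλΘ(θ)`. -/
def Cdf (lΘ : Measure Θ) (φ f : Θ → Y → ℝ) (s : ℝ) (y : Y) : ℝ :=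
  ∫ θ, (if f θ y ≤ s then φ θ y else 0) ∂lΘ

/-- Tie probability of the test quantity `f` under the density `φ(·|y)`:
`D_{φ,f}(s|y) = ∫ 1[f(θ,y) = s] φ(θ|y) dλΘ(θ)`. -/
def Dtie (lΘ : Measure Θ) (φ f : Θ → Y → ℝ) (s : ℝ) (y : Y) : ℝ :=
  ∫ θ, (if f θ y = s then φ θ y else 0) ∂lΘ

/-- The family of densities `φ` has no ties w.r.t. `f`. -/
def NoTies (lΘ : Measure Θ) (φ f : Θ → Y → ℝ) : Prop :=
  ∀ (θt : Θ) (y : Y), Dtie lΘ φ f (f θt y) y = 0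

/-- The continuous rank CDF `r_{φ,f}(x | θ̃, y)`. -/
def contRank (lΘ : Measure Θ) (φ f : Θ → Y → ℝ) (x : ℝ) (θt : Θ) (y : Y) : ℝ :=
  if Dtie lΘ φ f (f θt y) y = 0 then
    (if Cdf lΘ φ f (f θt y) y ≤ x then 1 else 0)
  else
    min 1 (max 0 ((x - Cdf lΘ φ f (f θt y) y + Dtie lΘ φ f (f θt y) y) /
      Dtie lΘ φ f (f θt y) y))

/-- The continuous `q_{φ,f}(x|y)`: average of the continuous rank CDF over the true posterior. -/
def qfun (lΘ : Measure Θ) (prior : Θ → ℝ) (obs : Y → Θ → ℝ) (φ f : Θ → Y → ℝ)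
    (x : ℝ) (y : Y) : ℝ :=
  ∫ θt, contRank lΘ φ f x θt y * post lΘ prior obs θt y ∂lΘ

/-- `φ` passes continuous SBC w.r.t. `f`. -/
def PassesContSBC (lΘ : Measure Θ) (lY : Measure Y) (prior : Θ → ℝ)
    (obs : Y → Θ → ℝ) (φ f : Θ → Y → ℝ) : Prop :=
  ∀ x ∈ Set.Icc (0 : ℝ) 1,
    ∫ y, qfun lΘ prior obs φ f x y * marg lΘ prior obs y ∂lY = x

/-- Number of posterior draws whose test-quantity value is strictly below that of `θt`. -/
def Nless (f : Θ → Y → ℝ) {M : ℕ} (θs : Fin M → Θ) (θt : Θ) (y : Y) : ℕ :=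
  (Finset.univ.filter fun m => f (θs m) y < f θt y).card

/-- Number of posterior draws whose test-quantity value ties with that of `θt`. -/
def Neq (f : Θ → Y → ℝ) {M : ℕ} (θs : Fin M → Θ) (θt : Θ) (y : Y) : ℕ :=
  (Finset.univ.filter fun m => f (θs m) y = f θt y).card

/-- The measure on `Θ` with density `φ(·|y)` w.r.t. `lΘ`. -/
def postFamMeas (lΘ : Measure Θ) (φ : Θ → Y → ℝ) (y : Y) : Measure Θ :=
  lΘ.withDensity fun θ => ENNReal.ofReal (φ θ y)

/-- The `M`-sample rank CDF `R_{φ,f}(i | θ̃, y) = Pr(N_total ≤ i)` for i.i.d. draws from `φ_y`. -/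
def sampleRank (lΘ : Measure Θ) (φ f : Θ → Y → ℝ) (M i : ℕ) (θt : Θ) (y : Y) : ℝ :=
  ∫ θs : Fin M → Θ,
    min 1 (max 0 (((i : ℝ) + 1 - (Nless f θs θt y : ℝ)) / ((Neq f θs θt y : ℝ) + 1)))
    ∂(Measure.pi fun _ : Fin M => postFamMeas lΘ φ y)

/-- The `M`-sample `Q_{φ,f}(i|y)`: average of the sample rank CDF over the true posterior. -/
def Qfun (lΘ : Measure Θ) (prior : Θ → ℝ) (obs : Y → Θ → ℝ)
    (φ f : Θ → Y → ℝ) (M i : ℕ) (y : Y) : ℝ :=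
  ∫ θt, sampleRank lΘ φ f M i θt y * post lΘ prior obs θt y ∂lΘ

/-- `φ` passes `M`-sample SBC w.r.t. `f`. -/
def PassesSampleSBC (lΘ : Measure Θ) (lY : Measure Y) (prior : Θ → ℝ)
    (obs : Y → Θ → ℝ) (φ f : Θ → Y → ℝ) (M : ℕ) : Prop :=
  ∀ i < M, ∫ y, Qfun lΘ prior obs φ f M i y * marg lΘ prior obs y ∂lY
    = ((i : ℝ) + 1) / ((M : ℝ) + 1)

lemma clamp_one_sub (t : ℝ) : min 1 (max 0 (1 - t)) = 1 - min 1 (max 0 t) := by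
  rcases le_total t 0 with h | h <;> rcases le_total 1 t with h' | h' <;>
    simp [min_def, max_def] <;> split_ifs <;> linarith

lemma nless_neg_eq {M : ℕ} (f : Θ → Y → ℝ) (θs : Fin M → Θ) (θt : Θ) (y : Y) :
    (Nless (fun θ y' => - f θ y') θs θt y : ℝ)
      = M - Nless f θs θt y - Neq f θs θt y := by
  classical
  have key : Nless (fun θ y' => - f θ y') θs θt y
      + Nless f θs θt y + Neq f θs θt y = M := by
    unfold Nless Neq
    rw [Finset.card_filter, Finset.card_filter, Finset.card_filter,
      ← Finset.sum_add_distrib, ← Finset.sum_add_distrib]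
    refine Eq.trans (b := ∑ _m : Fin M, 1) (Finset.sum_congr rfl fun m _ => ?_) (by simp)
    rcases lt_trichotomy (f (θs m) y) (f θt y) with h | h | h
    · simp [h, not_lt_of_gt h, ne_of_lt h, neg_lt_neg_iff, not_lt_of_gt, lt_asymm h]
    · simp [h]
    · simp [neg_lt_neg_iff, h, lt_asymm h, ne_of_gt h]
  have := congrArg (fun n : ℕ => (n : ℝ)) key
  push_cast at this
  linarith

lemma neq_neg_eq {M : ℕ} (f : Θ → Y → ℝ) (θs : Fin M → Θ) (θt : Θ) (y : Y) :
    Neq (fun θ y' => - f θ y') θs θt y = Neq f θs θt y := by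
  unfold Neq
  congr 1
  apply Finset.filter_congr
  intro m _
  simp [neg_eq_iff_eq_neg, neg_inj]

theorem reverse_transformation_sample_version
    (lΘ : Measure Θ) (lY : Measure Y) [SigmaFinite lΘ] [SigmaFinite lY]
    (prior : Θ → ℝ) (obs : Y → Θ → ℝ) (φ f : Θ → Y → ℝ)
    (hprior_meas : Measurable prior) (hprior_nonneg : ∀ θ, 0 ≤ prior θ)
    (hprior_int : ∫ θ, prior θ ∂lΘ = 1)
    (hobs_meas : Measurable (Function.uncurry obs))
    (hobs_nonneg : ∀ (y : Y) (θ : Θ), 0 ≤ obs y θ)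
    (hobs_int : ∀ θ, ∫ y, obs y θ ∂lY = 1)
    (hmarg_pos : ∀ y, 0 < marg lΘ prior obs y)
    (hφ_meas : Measurable (Function.uncurry φ))
    (hφ_nonneg : ∀ (θ : Θ) (y : Y), 0 ≤ φ θ y)
    (hφ_int : ∀ y, ∫ θ, φ θ y ∂lΘ = 1)
    (hf_meas : Measurable (Function.uncurry f))
    (y : Y) (θt : Θ) (M i : ℕ) (hi : i < M) :
    sampleRank lΘ φ (fun θ y' => - f θ y') M i θt y
      = 1 - sampleRank lΘ φ f M (M - i - 1) θt y := by
  classical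
  have hφy_meas : Measurable fun θ => φ θ y :=
    hφ_meas.comp (measurable_id.prodMk measurable_const)
  have hint : Integrable (fun θ => φ θ y) lΘ := by
    by_contra h
    have h1 := hφ_int y
    rw [integral_undef h] at h1
    norm_num at h1
  haveI hprob : IsProbabilityMeasure (postFamMeas lΘ φ y) := by
    constructor
    rw [postFamMeas, withDensity_apply _ MeasurableSet.univ, setLIntegral_univ,
      ← ofReal_integral_eq_lintegral_ofReal hint
        (Filter.Eventually.of_forall fun θ => hφ_nonneg θ y), hφ_int y]
    simp
  haveI : IsProbabilityMeasure (Measure.pi fun _ : Fin M => postFamMeas lΘ φ y) :=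
    inferInstance
  set μ := Measure.pi fun _ : Fin M => postFamMeas lΘ φ y with hμ
  have hfθ : Measurable fun θ => f θ y :=
    hf_meas.comp (measurable_id.prodMk measurable_const)
  have hNless : Measurable fun θs : Fin M → Θ => (Nless f θs θt y : ℝ) := by
    have hrw : ∀ θs : Fin M → Θ,
        (Nless f θs θt y : ℝ) = ∑ m, if f (θs m) y < f θt y then (1 : ℝ) else 0 := by
      intro θs
      unfold Nless
      rw [Finset.card_filter]
      push_cast
      rfl
    simp only [hrw]
    apply Finset.measurable_sum
    intro m _
    exact Measurable.ite
      (measurableSet_lt (hfθ.comp (measurable_pi_apply m)) measurable_const)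
      measurable_const measurable_const
  have hNeq : Measurable fun θs : Fin M → Θ => (Neq f θs θt y : ℝ) := by
    have hrw : ∀ θs : Fin M → Θ,
        (Neq f θs θt y : ℝ) = ∑ m, if f (θs m) y = f θt y then (1 : ℝ) else 0 := by
      intro θs
      unfold Neq
      rw [Finset.card_filter]
      push_cast
      rfl
    simp only [hrw]
    apply Finset.measurable_sum
    intro m _
    exact Measurable.ite
      (measurableSet_eq_fun (hfθ.comp (measurable_pi_apply m)) measurable_const)
      measurable_const measurable_const
  set j := M - i - 1 with hj
  set h : (Fin M → Θ) → ℝ := fun θs =>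
    min 1 (max 0 (((j : ℝ) + 1 - (Nless f θs θt y : ℝ)) / ((Neq f θs θt y : ℝ) + 1)))
    with hh
  have hmeas : Measurable h := by
    apply Measurable.min measurable_const
    apply Measurable.max measurable_const
    exact (measurable_const.sub hNless).div (hNeq.add measurable_const)
  have hIntegrable : Integrable h μ := by
    refine (integrable_const (1 : ℝ)).mono' hmeas.aestronglyMeasurable ?_
    refine Filter.Eventually.of_forall fun θs => ?_
    rw [Real.norm_eq_abs, abs_le]
    constructor
    · have : (0 : ℝ) ≤ h θs := le_min zero_le_one (le_max_left _ _)
      linarith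
    · exact min_le_left _ _
  have hcastj : ((j : ℝ) + 1) = (M : ℝ) - i := by
    have h1 : j = M - (i + 1) := by omega
    rw [h1, Nat.cast_sub hi]
    push_cast
    ring
  have hpoint : ∀ θs : Fin M → Θ,
      min 1 (max 0 (((i : ℝ) + 1 - (Nless (fun θ y' => - f θ y') θs θt y : ℝ)) /
        ((Neq (fun θ y' => - f θ y') θs θt y : ℝ) + 1))) = 1 - h θs := by
    intro θs
    rw [nless_neg_eq, neq_neg_eq, hh]
    set a := (Nless f θs θt y : ℝ)
    set e := (Neq f θs θt y : ℝ)
    have he : (0 : ℝ) < e + 1 := by positivity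
    have heq : ((i : ℝ) + 1 - ((M : ℝ) - a - e)) / (e + 1)
        = 1 - ((j : ℝ) + 1 - a) / (e + 1) := by
      rw [hcastj]
      field_simp
      ring
    rw [heq, clamp_one_sub]
  unfold sampleRank
  calc (∫ θs : Fin M → Θ, min 1 (max 0 (((i : ℝ) + 1
        - (Nless (fun θ y' => - f θ y') θs θt y : ℝ)) /
        ((Neq (fun θ y' => - f θ y') θs θt y : ℝ) + 1))) ∂μ)
      = ∫ θs, (1 - h θs) ∂μ := by
        exact integral_congr_ae (Filter.Eventually.of_forall hpoint)
    _ = (∫ _θs : Fin M → Θ, (1 : ℝ) ∂μ) - ∫ θs, h θs ∂μ :=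
        integral_sub (integrable_const 1) hIntegrable
    _ = 1 - ∫ θs, h θs ∂μ := by simp

end SBC
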